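/- Assume R is reduced, let λ ∈ P⁺, let π ∈ E, and let q, t > 0 be real numbers. Then the following identity holds in ℝ[P] (it is the identity obtained from the action of the Macdonald operator D_π on m_λ, namely D_π m_λ = t^{⟨π,ρ⟩} Σ_{ν∈W(λ)} (Σ_{τ∈W(π)} t^{⟨τ,ρ⟩} q^{⟨τ,ν⟩}) χ_ν, after multiplying by the Weyl denominator): Σ_{ν∈W(λ)} Σ_{w∈W} Σ_{τ∈W(π)} det(w) · t^{⟨τ, w(ρ)⟩} · q^{⟨τ, ν⟩} · e^{ν + w(ρ)} = Σ_{ν∈W(λ)} ( Σ_{τ∈W(π)} t^{⟨τ,ρ⟩} q^{⟨τ,ν⟩} ) · Σ_{w∈W} det(w) · e^{w(ν+ρ)}, where the inner sums over W(λ) and W(π) run over the (finite) Weyl orbits of λ and π, and real powers t^x, q^x are used. -/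
import Mathlib


open scoped RealInnerProductSpace

noncomputable section

variable {E : Type*} [NormedAddCommGroup E] [InnerProductSpace ℝ E]

/-- The coroot pairing `⟨x, α∨⟩ = 2⟨x,α⟩/⟨α,α⟩`. -/
def copair (α x : E) : ℝ := 2 * ⟪x, α⟫ / ⟪α, α⟫

/-- The orthogonal reflection `r_α(x) = x - ⟨x,α∨⟩α`. -/
def reflRoot (α x : E) : E := x - copair α x • α

/-- The set of reflections in the roots of `R`, as linear automorphisms. -/
def reflections (R : Finset E) : Set (E ≃ₗ[ℝ] E) :=
  {g | ∃ α ∈ R, ∀ x, g x = reflRoot α x}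

/-- The Weyl group of `R`. -/
def weylGroup (R : Finset E) : Subgroup (E ≃ₗ[ℝ] E) :=
  Subgroup.closure (reflections R)

/-- Membership in the weight lattice `P`. -/
def IsWeight (R : Finset E) (x : E) : Prop :=
  ∀ α ∈ R, ∃ z : ℤ, copair α x = (z : ℝ)

/-- Dominance: nonnegative pairing with all positive coroots. -/
def IsDominant (Rp : Finset E) (x : E) : Prop :=
  ∀ α ∈ Rp, 0 ≤ copair α x

/-- The Weyl orbit `W(x)` as a finset. -/
def weylOrbit [DecidableEq E] (R : Finset E) [Fintype (weylGroup R)] (x : E) : Finset E :=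
  Finset.image (fun w : weylGroup R => (w : E ≃ₗ[ℝ] E) x) Finset.univ

/-- The determinant of a Weyl group element, as a linear map on `E`. -/
def detW {R : Finset E} (w : weylGroup R) : ℝ :=
  LinearMap.det ((w : E ≃ₗ[ℝ] E) : E →ₗ[ℝ] E)


lemma weyl_inner {R : Finset E} (h0 : (0 : E) ∉ R) {w : E ≃ₗ[ℝ] E}
    (hw : w ∈ weylGroup R) (x y : E) : ⟪w x, w y⟫ = ⟪x, y⟫ := by
  revert x y
  induction hw using Subgroup.closure_induction with
  | mem g hg =>
    obtain ⟨α, hα, hg⟩ := hg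
    intro x y
    have hαne : α ≠ 0 := fun h => h0 (h ▸ hα)
    have hαα : ⟪α, α⟫ ≠ 0 := inner_self_ne_zero.2 hαne
    rw [hg x, hg y]
    unfold reflRoot copair
    simp only [inner_sub_left, inner_sub_right, real_inner_smul_left,
      real_inner_smul_right, real_inner_comm α x, real_inner_comm α y]
    field_simp
    ring
  | one => intro x y; simp
  | mul g h hg hh ihg ihh =>
    intro x y
    have h1 : (g * h) x = g (h x) := rfl
    have h2 : (g * h) y = g (h y) := rfl
    rw [h1, h2, ihg, ihh]
  | inv g hg ih =>
    intro x y
    have h1 : g (g⁻¹ x) = x := g.apply_symm_apply x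
    have h2 : g (g⁻¹ y) = y := g.apply_symm_apply y
    have h3 := ih (g⁻¹ x) (g⁻¹ y)
    rw [h1, h2] at h3
    exact h3.symm

lemma sum_weylOrbit_comp [DecidableEq E] {R : Finset E} [Fintype (weylGroup R)]
    {M : Type*} [AddCommMonoid M] (π : E) (w : weylGroup R) (F : E → M) :
    ∑ τ ∈ weylOrbit R π, F ((w : E ≃ₗ[ℝ] E) τ) = ∑ τ ∈ weylOrbit R π, F τ := by
  refine Finset.sum_nbij' (fun τ => (w : E ≃ₗ[ℝ] E) τ)
    (fun τ => ((w⁻¹ : weylGroup R) : E ≃ₗ[ℝ] E) τ) ?_ ?_ ?_ ?_ ?_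
  · intro a ha
    simp only [weylOrbit, Finset.mem_image, Finset.mem_univ, true_and] at ha ⊢
    obtain ⟨u, rfl⟩ := ha
    exact ⟨w * u, rfl⟩
  · intro a ha
    simp only [weylOrbit, Finset.mem_image, Finset.mem_univ, true_and] at ha ⊢
    obtain ⟨u, rfl⟩ := ha
    exact ⟨w⁻¹ * u, rfl⟩
  · intro a _
    exact (w : E ≃ₗ[ℝ] E).symm_apply_apply a
  · intro a _
    exact (w : E ≃ₗ[ℝ] E).apply_symm_apply a
  · intro a _; rfl

/-- **Action of the Macdonald operator on monomial symmetric functions**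
(multiplied through by the Weyl denominator):
`Σ_{ν∈W(λ)} Σ_{w∈W} Σ_{τ∈W(π)} det(w) t^{⟨τ,w(ρ)⟩} q^{⟨τ,ν⟩} e^{ν+w(ρ)}
  = Σ_{ν∈W(λ)} (Σ_{τ∈W(π)} t^{⟨τ,ρ⟩} q^{⟨τ,ν⟩}) Σ_{w∈W} det(w) e^{w(ν+ρ)}`.
Powers are real (`rpow`) powers and formal exponentials `e^μ` are realized as
`AddMonoidAlgebra.single μ 1`. -/
theorem macdonald_operator_action
    [DecidableEq E] (R Rp : Finset E) [Fintype (weylGroup R)]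
    (h0 : (0 : E) ∉ R)
    (hspan : Submodule.span ℝ (R : Set E) = ⊤)
    (hcrys : ∀ α ∈ R, ∀ β ∈ R, ∃ z : ℤ, copair α β = (z : ℝ))
    (hrc : ∀ α ∈ R, ∀ β ∈ R, reflRoot α β ∈ R)
    (hred : ∀ α ∈ R, (2 : ℝ) • α ∉ R)
    (f : E →ₗ[ℝ] ℝ) (hf : ∀ α ∈ R, f α ≠ 0)
    (hRp : ∀ α, α ∈ Rp ↔ α ∈ R ∧ 0 < f α)
    (ρ : E) (hρ : ρ = (2⁻¹ : ℝ) • ∑ α ∈ Rp, α)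
    (lam : E) (hlamP : IsWeight R lam) (hlamD : IsDominant Rp lam)
    (π : E) (q t : ℝ) (hq : 0 < q) (ht : 0 < t) :
    ∑ ν ∈ weylOrbit R lam, ∑ w : weylGroup R, ∑ τ ∈ weylOrbit R π,
        (detW w * t ^ ⟪τ, (w : E ≃ₗ[ℝ] E) ρ⟫ * q ^ ⟪τ, ν⟫) •
          AddMonoidAlgebra.single (ν + (w : E ≃ₗ[ℝ] E) ρ) (1 : ℝ) =
      ∑ ν ∈ weylOrbit R lam,
        (∑ τ ∈ weylOrbit R π, t ^ ⟪τ, ρ⟫ * q ^ ⟪τ, ν⟫) •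
          ∑ w : weylGroup R,
            detW w • AddMonoidAlgebra.single ((w : E ≃ₗ[ℝ] E) (ν + ρ)) (1 : ℝ) := by
  classical
  -- Put the RHS into triple-sum form and swap sums on both sides.
  have rhs_eq : ∀ ν : E,
      (∑ τ ∈ weylOrbit R π, t ^ ⟪τ, ρ⟫ * q ^ ⟪τ, ν⟫) •
          ∑ w : weylGroup R,
            detW w • AddMonoidAlgebra.single ((w : E ≃ₗ[ℝ] E) (ν + ρ)) (1 : ℝ)
        = ∑ w : weylGroup R, ∑ τ ∈ weylOrbit R π,
            ((t ^ ⟪τ, ρ⟫ * q ^ ⟪τ, ν⟫) * detW w) •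
              AddMonoidAlgebra.single ((w : E ≃ₗ[ℝ] E) (ν + ρ)) (1 : ℝ) := by
    intro ν
    rw [Finset.smul_sum]
    refine Finset.sum_congr rfl fun w _ => ?_
    rw [Finset.sum_smul]
    refine Finset.sum_congr rfl fun τ _ => ?_
    rw [smul_smul]
  simp only [rhs_eq]
  rw [Finset.sum_comm, Finset.sum_comm (s := weylOrbit R lam)]
  refine Finset.sum_congr rfl fun w _ => ?_
  -- Reindex ν ↦ w ν and τ ↦ w τ on the left.
  rw [← sum_weylOrbit_comp lam w (fun ν => ∑ τ ∈ weylOrbit R π,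
    (detW w * t ^ ⟪τ, (w : E ≃ₗ[ℝ] E) ρ⟫ * q ^ ⟪τ, ν⟫) •
      AddMonoidAlgebra.single (ν + (w : E ≃ₗ[ℝ] E) ρ) (1 : ℝ))]
  refine Finset.sum_congr rfl fun ν _ => ?_
  rw [← sum_weylOrbit_comp π w (fun τ => (detW w * t ^ ⟪τ, (w : E ≃ₗ[ℝ] E) ρ⟫ *
      q ^ ⟪τ, (w : E ≃ₗ[ℝ] E) ν⟫) •
      AddMonoidAlgebra.single ((w : E ≃ₗ[ℝ] E) ν + (w : E ≃ₗ[ℝ] E) ρ) (1 : ℝ))]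
  refine Finset.sum_congr rfl fun τ _ => ?_
  rw [weyl_inner h0 w.2 τ ρ, weyl_inner h0 w.2 τ ν, ← map_add]
  congr 1
  ring
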